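/- Let $k$ be a field, let $d \geq 2$ and $N \geq 0$ be integers, and let $\varphi$ be a homogeneous polynomial of degree $d$ in $N+1$ variables over $k$. Let $f \in k[t]$ be an irreducible polynomial of degree $n \geq 2$ with $\gcd(n,d)=1$, and set $K := k[t]/(f)$, a simple extension of $k$ of degree $n$. Suppose that $\varphi$ is isotropic over $K$. Suppose moreover that every partition of $nd-n-d$ contains a part $a$ with $\gcd(a,d)=1$ and $n \nmid a$ (i.e., there are no bad partitions of $nd-n-d$). Then there exists a finite field extension $L/k$ with $\gcd([L:k],d)=1$, $n \nmid [L:k]$, and $[L:k] \leq nd-n-d$, such that $\varphi$ is isotropic over $L$. -/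

import Mathlib

open Polynomial

namespace MainAux

variable {k : Type} [Field k]

lemma coeff_prod_of_natDegree_le' {ι : Type*} (s : Finset ι) (f : ι → k[X]) (n : ι → ℕ)
    (h : ∀ i ∈ s, (f i).natDegree ≤ n i) :
    (∏ i ∈ s, f i).coeff (∑ i ∈ s, n i) = ∏ i ∈ s, (f i).coeff (n i) := by
  induction s using Finset.cons_induction with
  | empty => simp
  | cons a s ha ih =>
    rw [Finset.prod_cons, Finset.sum_cons,
      Polynomial.coeff_mul_add_eq_of_natDegree_le (h a (Finset.mem_cons_self a s))
        (le_trans (Polynomial.natDegree_prod_le _ _)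
          (Finset.sum_le_sum fun i hi => h i (Finset.mem_cons_of_mem hi))),
      ih (fun i hi => h i (Finset.mem_cons_of_mem hi)), Finset.prod_cons]

lemma hom_sum {σ : Type*} {d : ℕ} {φ : MvPolynomial σ k} (hφ : φ.IsHomogeneous d)
    {m : σ →₀ ℕ} (hm : m ∈ φ.support) : ∑ i ∈ m.support, m i = d := by
  have := hφ (MvPolynomial.mem_support_iff.mp hm)
  simpa [Finsupp.weight_apply, Finsupp.sum] using this

lemma natDegree_eval₂_le {σ : Type*} {d : ℕ} (φ : MvPolynomial σ k)
    (hφ : φ.IsHomogeneous d) (W : σ → k[X]) (e : ℕ) (hW : ∀ i, (W i).natDegree ≤ e) :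
    (MvPolynomial.eval₂ Polynomial.C W φ).natDegree ≤ d * e := by
  rw [MvPolynomial.eval₂_eq]
  apply Polynomial.natDegree_sum_le_of_forall_le
  intro m hm
  refine le_trans Polynomial.natDegree_mul_le ?_
  rw [Polynomial.natDegree_C, zero_add]
  refine le_trans (Polynomial.natDegree_prod_le _ _) ?_
  calc ∑ i ∈ m.support, ((W i) ^ m i).natDegree
      ≤ ∑ i ∈ m.support, m i * e := by
        refine Finset.sum_le_sum fun i _ => le_trans Polynomial.natDegree_pow_le ?_
        exact Nat.mul_le_mul_left _ (hW i)
    _ = d * e := by rw [← Finset.sum_mul, hom_sum hφ hm]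

lemma coeff_eval₂_top {σ : Type*} {d : ℕ} (φ : MvPolynomial σ k)
    (hφ : φ.IsHomogeneous d) (W : σ → k[X]) (e : ℕ) (hW : ∀ i, (W i).natDegree ≤ e) :
    (MvPolynomial.eval₂ Polynomial.C W φ).coeff (d * e)
      = MvPolynomial.eval (fun i => (W i).coeff e) φ := by
  rw [MvPolynomial.eval₂_eq, MvPolynomial.eval_eq, Polynomial.finset_sum_coeff]
  apply Finset.sum_congr rfl
  intro m hm
  rw [Polynomial.coeff_C_mul]
  congr 1
  have hde : d * e = ∑ i ∈ m.support, m i * e := by rw [← Finset.sum_mul, hom_sum hφ hm]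
  rw [hde, coeff_prod_of_natDegree_le' _ _ _
    (fun i _ => le_trans Polynomial.natDegree_pow_le (Nat.mul_le_mul_left _ (hW i)))]
  exact Finset.prod_congr rfl fun i _ => Polynomial.coeff_pow_of_natDegree_le (hW i)

lemma eval₂_mul_left {σ : Type*} {d : ℕ} (φ : MvPolynomial σ k)
    (hφ : φ.IsHomogeneous d) (g : k[X]) (W : σ → k[X]) :
    MvPolynomial.eval₂ Polynomial.C (fun i => g * W i) φ
      = g ^ d * MvPolynomial.eval₂ Polynomial.C W φ := by
  rw [MvPolynomial.eval₂_eq, MvPolynomial.eval₂_eq, Finset.mul_sum]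
  apply Finset.sum_congr rfl
  intro m hm
  simp_rw [mul_pow, Finset.prod_mul_distrib, Finset.prod_pow_eq_pow_sum, hom_sum hφ hm]
  ring

lemma mk_eval₂ {σ : Type*} (q : k[X]) (W : σ → k[X]) (φ : MvPolynomial σ k) :
    MvPolynomial.eval (fun i => AdjoinRoot.mk q (W i))
      (MvPolynomial.map (algebraMap k (AdjoinRoot q)) φ)
      = AdjoinRoot.mk q (MvPolynomial.eval₂ Polynomial.C W φ) := by
  rw [MvPolynomial.eval_map, MvPolynomial.eval₂_comp_left (AdjoinRoot.mk q) Polynomial.C W φ,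
    AdjoinRoot.algebraMap_eq]
  rfl

end MainAux

theorem main_theorem (k : Type) [Field k] (d N n : ℕ) (hd : 2 ≤ d) (hn : 2 ≤ n)
    (hgcd : Nat.gcd n d = 1)
    (φ : MvPolynomial (Fin (N + 1)) k) (hφ : φ.IsHomogeneous d)
    (f : Polynomial k) (hf : Irreducible f) (hfdeg : f.natDegree = n)
    (hiso : ∃ w : Fin (N + 1) → AdjoinRoot f, w ≠ 0 ∧
      MvPolynomial.eval w (MvPolynomial.map (algebraMap k (AdjoinRoot f)) φ) = 0)
    (hpart : ∀ m : Multiset ℕ, m ≠ 0 → (∀ a ∈ m, 0 < a) → m.sum = n * d - n - d →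
      ∃ a ∈ m, Nat.gcd a d = 1 ∧ ¬ n ∣ a) :
    ∃ (L : Type) (_ : Field L) (_ : Algebra k L),
      FiniteDimensional k L ∧
      Nat.gcd (Module.finrank k L) d = 1 ∧
      ¬ n ∣ Module.finrank k L ∧
      Module.finrank k L ≤ n * d - n - d ∧
      ∃ w : Fin (N + 1) → L, w ≠ 0 ∧
        MvPolynomial.eval w (MvPolynomial.map (algebraMap k L) φ) = 0 := by
  classical
  obtain ⟨w, hw0, hweval⟩ := hiso
  have hf0 : f ≠ 0 := hf.ne_zero
  -- `1 ≤ n*d - n - d`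
  have hu1 : 1 ≤ n * d - n - d := by
    have h3 : 3 ≤ n ∨ 3 ≤ d := by
      by_contra hc
      push_neg at hc
      obtain ⟨h1, h2⟩ := hc
      have hn2 : n = 2 := by omega
      have hd2 : d = 2 := by omega
      rw [hn2, hd2] at hgcd
      norm_num at hgcd
    have : n + d + 1 ≤ n * d := by rcases h3 with h | h <;> nlinarith
    omega
  -- choose representatives of degree < n
  set f' : k[X] := f * Polynomial.C f.leadingCoeff⁻¹ with hf'def
  have hf'monic : f'.Monic := Polynomial.monic_mul_leadingCoeff_inv hf0
  have hf'ne1 : f' ≠ 1 := by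
    intro h1
    have : IsUnit f := by
      refine IsUnit.of_mul_eq_one (a := f) (Polynomial.C f.leadingCoeff⁻¹) ?_
      rw [← hf'def, h1]
    exact hf.not_isUnit this
  have hrep : ∀ i : Fin (N + 1), ∃ Wi : k[X], AdjoinRoot.mk f Wi = w i ∧ Wi.natDegree < n := by
    intro i
    obtain ⟨g, hg⟩ := AdjoinRoot.mk_surjective (w i)
    refine ⟨g %ₘ f', ?_, ?_⟩
    · have hdvd : f ∣ f' * (g /ₘ f') := Dvd.dvd.mul_right ⟨Polynomial.C f.leadingCoeff⁻¹, rfl⟩ _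
      have : AdjoinRoot.mk f (f' * (g /ₘ f')) = 0 := (AdjoinRoot.mk_eq_zero).mpr hdvd
      have hsplit : g %ₘ f' = g - f' * (g /ₘ f') := by
        rw [Polynomial.modByMonic_eq_sub_mul_div g f']
      rw [hsplit, map_sub, this, sub_zero, hg]
    · calc (g %ₘ f').natDegree < f'.natDegree := Polynomial.natDegree_modByMonic_lt g hf'monic hf'ne1
        _ = n := by
          rw [hf'def, Polynomial.natDegree_mul hf0, Polynomial.natDegree_C, add_zero, hfdeg]
          simp [Polynomial.leadingCoeff_eq_zero, hf0]
  choose W hWmk hWdeg using hrep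
  -- the index where w is nonzero
  obtain ⟨j, hj⟩ : ∃ j, w j ≠ 0 := by
    by_contra hc; push_neg at hc; exact hw0 (funext hc)
  have hWj : W j ≠ 0 := by intro h; apply hj; rw [← hWmk j, h, map_zero]
  -- f divides eval of W
  have hfP : f ∣ MvPolynomial.eval₂ Polynomial.C W φ := by
    rw [← AdjoinRoot.mk_eq_zero, ← MainAux.mk_eval₂]
    have : (fun i => AdjoinRoot.mk f (W i)) = w := funext hWmk
    rw [this, hweval]
  -- divide by the gcd
  set g : k[X] := Finset.gcd Finset.univ W with hgdef
  have hg0 : g ≠ 0 := by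
    intro h
    exact hWj (Finset.gcd_eq_zero_iff.mp h j (Finset.mem_univ j))
  set W₀ : Fin (N + 1) → k[X] := fun i => W i / g with hW₀def
  have hmul : ∀ i, g * W₀ i = W i := fun i =>
    EuclideanDomain.mul_div_cancel' hg0 (Finset.gcd_dvd (Finset.mem_univ i))
  have hgcd1 : Finset.gcd Finset.univ W₀ = 1 :=
    Finset.gcd_div_eq_one (Finset.mem_univ j) hWj
  have hW₀j : W₀ j ≠ 0 := by
    intro h
    apply hWj; rw [← hmul j, h, mul_zero]
  have hW₀deg : ∀ i, (W₀ i).natDegree < n := by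
    intro i
    by_cases h : W₀ i = 0
    · rw [h]; simpa using lt_of_le_of_lt (Nat.zero_le _) (hWdeg j)
    · refine lt_of_le_of_lt ?_ (hWdeg i)
      refine Polynomial.natDegree_le_natDegree (Polynomial.degree_le_of_dvd ⟨g, ?_⟩ ?_)
      · rw [mul_comm, hmul i]
      · rw [← hmul i]; exact mul_ne_zero hg0 h
  -- f divides eval of the primitive W₀
  have hfprime : Prime f := UniqueFactorizationMonoid.irreducible_iff_prime.mp hf
  have hfg : ¬ f ∣ g := by
    intro h
    apply hj
    rw [← hWmk j, AdjoinRoot.mk_eq_zero.mpr (dvd_trans h (Finset.gcd_dvd (Finset.mem_univ j)))]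
  have hfP₀ : f ∣ MvPolynomial.eval₂ Polynomial.C W₀ φ := by
    have := hfP
    conv at this => rw [show W = fun i => g * W₀ i from funext fun i => (hmul i).symm]
    rw [MainAux.eval₂_mul_left φ hφ g W₀] at this
    rcases hfprime.2.2 _ _ this with h | h
    · exact absurd (hfprime.dvd_of_dvd_pow h) hfg
    · exact h
  -- leading coefficients
  set e : ℕ := Finset.sup Finset.univ (fun i => (W₀ i).natDegree) with hedef
  have hWe : ∀ i, (W₀ i).natDegree ≤ e := fun i => by
    rw [hedef]; exact Finset.le_sup (f := fun i => (W₀ i).natDegree) (Finset.mem_univ i)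
  have hen : e ≤ n - 1 := by
    refine Finset.sup_le fun i _ => ?_
    have := hW₀deg i; omega
  set v : Fin (N + 1) → k := fun i => (W₀ i).coeff e with hvdef
  have hvne : v ≠ 0 := by
    obtain ⟨i, hi⟩ := Finset.exists_mem_eq_sup Finset.univ ⟨j, Finset.mem_univ j⟩
      (fun i => (W₀ i).natDegree)
    intro hv
    by_cases hWi : W₀ i = 0
    · have he0 : e = 0 := by rw [hedef, hi.2, hWi, Polynomial.natDegree_zero]
      have hc0 : (W₀ j).coeff 0 = 0 := by
        have := congrFun hv j; simpa [hvdef, he0] using this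
      apply hW₀j
      have hdeg0 : (W₀ j).natDegree = 0 := le_antisymm (he0 ▸ hWe j) (Nat.zero_le _)
      rw [Polynomial.eq_C_of_natDegree_le_zero (le_of_eq hdeg0), hc0, map_zero]
    · have : (W₀ i).coeff e = 0 := congrFun hv i
      rw [hedef, hi.2] at this
      exact hWi (Polynomial.leadingCoeff_eq_zero.mp this)
  by_cases hvz : MvPolynomial.eval v φ = 0
  · -- isotropic over k itself
    refine ⟨k, inferInstance, inferInstance, inferInstance, ?_, ?_, ?_, v, hvne, ?_⟩
    · simp [Module.finrank_self]
    · simpa [Module.finrank_self] using Nat.not_dvd_of_pos_of_lt one_pos (by omega)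
    · simpa [Module.finrank_self] using hu1
    · have : algebraMap k k = RingHom.id k := rfl
      rw [this, MvPolynomial.map_id, hvz]
  · -- the main case
    set P₀ : k[X] := MvPolynomial.eval₂ Polynomial.C W₀ φ with hP₀def
    have hcoeff : P₀.coeff (d * e) = MvPolynomial.eval v φ :=
      MainAux.coeff_eval₂_top φ hφ W₀ e hWe
    have hP₀deg : P₀.natDegree = d * e := by
      refine le_antisymm (MainAux.natDegree_eval₂_le φ hφ W₀ e hWe) ?_
      exact Polynomial.le_natDegree_of_ne_zero (hcoeff ▸ hvz)
    have hP₀0 : P₀ ≠ 0 := fun h => hvz (by rw [← hcoeff, h, Polynomial.coeff_zero])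
    obtain ⟨h, hPfh⟩ := hfP₀
    have hh0 : h ≠ 0 := by rintro rfl; rw [mul_zero] at hPfh; exact hP₀0 hPfh
    have hhdeg : n + h.natDegree = d * e := by
      rw [← hP₀deg, hPfh, Polynomial.natDegree_mul hf0 hh0, hfdeg]
    -- the partition
    set facs : Multiset k[X] := UniqueFactorizationMonoid.factors h with hfacs
    have hfacprod : Associated facs.prod h := UniqueFactorizationMonoid.factors_prod hh0
    have hfac0 : (0 : k[X]) ∉ facs := fun h0 =>
      (UniqueFactorizationMonoid.prime_of_factor _ h0).ne_zero rfl
    have hfacssum : (facs.map Polynomial.natDegree).sum = h.natDegree := by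
      rw [← Polynomial.natDegree_multiset_prod _ hfac0]
      exact Polynomial.natDegree_eq_of_degree_eq (Polynomial.degree_eq_degree_of_associated hfacprod)
    set M : Multiset ℕ := facs.map Polynomial.natDegree + Multiset.replicate (n - 1 - e) d
      with hMdef
    have hMsum : M.sum = n * d - n - d := by
      rw [hMdef, Multiset.sum_add, hfacssum, Multiset.sum_replicate, smul_eq_mul]
      -- n + h.natDegree = d * e, e ≤ n - 1, 2 ≤ n, 2 ≤ d
      have h1 : e + (n - 1 - e) = n - 1 := by omega
      have h2 : d * e + d * (n - 1 - e) = d * (n - 1) := by rw [← Nat.mul_add, h1]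
      have h3 : d * (n - 1) + d = d * n := by
        rw [← Nat.mul_succ]
        congr 1
        omega
      have h4 : n * d = d * n := Nat.mul_comm n d
      -- goal : h.natDegree + (n - 1 - e) * d = n * d - n - d
      have h5 : (n - 1 - e) * d = d * (n - 1 - e) := Nat.mul_comm _ _
      omega
    have hM0 : M ≠ 0 := by
      intro h0
      rw [h0] at hMsum
      simp at hMsum
      omega
    have hMpos : ∀ a ∈ M, 0 < a := by
      intro a ha
      rw [hMdef, Multiset.mem_add] at ha
      rcases ha with ha | ha
      · obtain ⟨p, hp, rfl⟩ := Multiset.mem_map.mp ha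
        exact (UniqueFactorizationMonoid.irreducible_of_factor p hp).natDegree_pos
      · rw [Multiset.eq_of_mem_replicate ha]; omega
    obtain ⟨a, haM, hagcd, hand⟩ := hpart M hM0 hMpos hMsum
    have haM' : a ∈ facs.map Polynomial.natDegree := by
      rw [hMdef, Multiset.mem_add] at haM
      rcases haM with h' | h'
      · exact h'
      · exfalso
        rw [Multiset.eq_of_mem_replicate h'] at hagcd
        rw [Nat.gcd_self] at hagcd
        omega
    obtain ⟨p, hpfac, hpa⟩ := Multiset.mem_map.mp haM'
    have hpirr : Irreducible p := UniqueFactorizationMonoid.irreducible_of_factor p hpfac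
    have hp0 : p ≠ 0 := hpirr.ne_zero
    haveI : Fact (Irreducible p) := ⟨hpirr⟩
    -- the field L
    refine ⟨AdjoinRoot p, inferInstance, inferInstance, ?_, ?_, ?_, ?_, ?_⟩
    · exact (AdjoinRoot.powerBasis hp0).finite
    · rw [(AdjoinRoot.powerBasis hp0).finrank, AdjoinRoot.powerBasis_dim, hpa]
      exact hagcd
    · rw [(AdjoinRoot.powerBasis hp0).finrank, AdjoinRoot.powerBasis_dim, hpa]
      exact hand
    · rw [(AdjoinRoot.powerBasis hp0).finrank, AdjoinRoot.powerBasis_dim, hpa]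
      have : a ≤ M.sum := Multiset.single_le_sum (fun x hx => Nat.zero_le x) a haM
      omega
    · refine ⟨fun i => AdjoinRoot.mk p (W₀ i), ?_, ?_⟩
      · obtain ⟨i, hpi⟩ : ∃ i, ¬ p ∣ W₀ i := by
          by_contra hc
          push_neg at hc
          have : p ∣ Finset.gcd Finset.univ W₀ :=
            Finset.dvd_gcd fun i _ => hc i
          rw [hgcd1] at this
          exact hpirr.not_isUnit (isUnit_of_dvd_one this)
        intro h0
        apply hpi
        have := congrFun h0 i
        exact (AdjoinRoot.mk_eq_zero).mp (by simpa using this)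
      · rw [MainAux.mk_eval₂, ← hP₀def, hPfh, map_mul]
        have hph : p ∣ h := (UniqueFactorizationMonoid.dvd_of_mem_factors hpfac)
        rw [(AdjoinRoot.mk_eq_zero).mpr hph, mul_zero]
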